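/- Fix N and ρ = e^{2πi/N}. Suppose (a_k), (b_k) satisfy a_k = c_k/N² + E_{1,k}, b_k = c_k/N² + E_{2,k}, where |c_k| ≤ C and |E_{j,k}| ≤ C/N⁴ for a constant C independent of N and k. Define q_0 = 0, q_1 = 1, q_{k+1} = (1+ρ+a_k)q_k − (ρ+b_k)q_{k−1}. Then there exist constants C̃, C′ > 0 independent of N and k such that for all sufficiently large N and all 1 ≤ k ≤ N+1: |q_k − q_{k−1}| ≤ C̃, |q_k| ≤ 2N, and |q_k − T_k| ≤ C′, where T_k = (1−ρ^k)/(1−ρ). -/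

import Mathlib

set_option maxHeartbeats 1000000 in
theorem stmt_11 (C : ℝ) (hC : 0 < C) :
    ∃ Ct C' : ℝ, 0 < Ct ∧ 0 < C' ∧ ∃ N₀ : ℕ, ∀ N : ℕ, N₀ ≤ N →
      ∀ ρ : ℂ, ρ = Complex.exp (2 * Real.pi * Complex.I / N) →
      ∀ a b c : ℕ → ℂ,
        (∀ k, ‖c k‖ ≤ C) →
        (∀ k, ‖a k - c k / (N : ℂ) ^ 2‖ ≤ C / (N : ℝ) ^ 4) →
        (∀ k, ‖b k - c k / (N : ℂ) ^ 2‖ ≤ C / (N : ℝ) ^ 4) →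
      ∀ q : ℕ → ℂ, q 0 = 0 → q 1 = 1 →
        (∀ k, q (k + 2) = (1 + ρ + a (k + 1)) * q (k + 1) - (ρ + b (k + 1)) * q k) →
      ∀ k, 1 ≤ k → k ≤ N + 1 →
        ‖q k - q (k - 1)‖ ≤ Ct ∧
        ‖q k‖ ≤ 2 * N ∧
        ‖q k - (1 - ρ ^ k) / (1 - ρ)‖ ≤ C' := by
  refine ⟨2, 32 * C, by norm_num, by positivity, max 4 ⌈18 * C⌉₊, ?_⟩
  intro N hN ρ hρ a b c hc ha hb q hq0 hq1 hq k hk1 hkN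
  have hN4 : (4 : ℕ) ≤ N := le_trans (le_max_left _ _) hN
  have hNr : (4 : ℝ) ≤ N := by exact_mod_cast hN4
  have hN0 : (0 : ℝ) < N := by linarith
  have hN18 : 18 * C ≤ N := Nat.ceil_le.mp (le_trans (le_max_right _ _) hN)
  have hNc : (N : ℂ) ≠ 0 := Nat.cast_ne_zero.mpr (by omega)
  -- properties of ρ
  have hρ1 : ‖ρ‖ = 1 := by
    rw [hρ]
    have h : 2 * (Real.pi:ℂ) * Complex.I / N = ((2 * Real.pi / N : ℝ) : ℂ) * Complex.I := by
      push_cast; ring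
    rw [h, Complex.norm_exp_ofReal_mul_I]
  have hρne : ρ ≠ 1 := by
    rw [hρ, Ne, Complex.exp_eq_one_iff]
    rintro ⟨n, hn⟩
    have hπ : (Real.pi : ℂ) ≠ 0 := by exact_mod_cast Real.pi_ne_zero
    have hI : Complex.I ≠ 0 := Complex.I_ne_zero
    have h2 : ((n * N : ℤ) : ℂ) = 1 := by
      push_cast
      field_simp at hn
      have h4 : (2 * (Real.pi:ℂ) * Complex.I) ≠ 0 :=
        mul_ne_zero (mul_ne_zero (two_ne_zero (α := ℂ)) hπ) hI
      linear_combination -hn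
    have h3 : (n * N : ℤ) = 1 := by exact_mod_cast h2
    have hdvd : (N : ℤ) ∣ 1 := ⟨n, by linarith⟩
    have := Int.le_of_dvd one_pos hdvd
    omega
  have h1ρ : (1:ℂ) - ρ ≠ 0 := sub_ne_zero.mpr (Ne.symm hρne)
  -- bounds on a, b
  have hcN : ∀ j, ‖c j / (N:ℂ)^2‖ ≤ C / (N:ℝ)^2 := by
    intro j
    rw [norm_div, norm_pow, Complex.norm_natCast]
    gcongr
    exact hc j
  have hsmall : C / (N:ℝ)^4 ≤ C / (N:ℝ)^2 := by
    gcongr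
    all_goals first | linarith | norm_num
  have hak : ∀ j, ‖a j‖ ≤ 2 * C / (N:ℝ)^2 := by
    intro j
    calc ‖a j‖ = ‖(a j - c j/(N:ℂ)^2) + c j/(N:ℂ)^2‖ := by
          congr 1; ring
    _ ≤ ‖a j - c j/(N:ℂ)^2‖ + ‖c j/(N:ℂ)^2‖ := norm_add_le _ _
    _ ≤ C / (N:ℝ)^4 + C / (N:ℝ)^2 := add_le_add (ha j) (hcN j)
    _ ≤ 2 * C / (N:ℝ)^2 := by rw [two_mul, add_div]; exact add_le_add hsmall (le_refl _)
  have hab : ∀ j, ‖a j - b j‖ ≤ 2 * C / (N:ℝ)^4 := by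
    intro j
    calc ‖a j - b j‖
        = ‖(a j - c j/(N:ℂ)^2) - (b j - c j/(N:ℂ)^2)‖ := by congr 1; ring
    _ ≤ ‖a j - c j/(N:ℂ)^2‖ + ‖b j - c j/(N:ℂ)^2‖ :=
        norm_sub_le _ _
    _ ≤ C / (N:ℝ)^4 + C / (N:ℝ)^4 := add_le_add (ha j) (hb j)
    _ = 2 * C / (N:ℝ)^4 := by ring
  -- δ and the power bound
  set δ : ℝ := 6*C/(N:ℝ)^2 with hδdef
  have hδ0 : 0 ≤ δ := by positivity
  have hδN : (N:ℝ) * δ ≤ 1/3 := by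
    have h : (N:ℝ) * δ = 6*C/N := by rw [hδdef]; field_simp
    rw [h, div_le_iff₀ hN0]
    linarith
  have hδ1 : δ ≤ 1 := by nlinarith
  have hpow : ∀ m : ℕ, m ≤ N → (1+δ)^m ≤ 3/2 := by
    intro m hm
    have h1 : (1+δ)^m ≤ (1+δ)^N := pow_le_pow_right₀ (by linarith) hm
    have h2 : (1 - (N:ℝ)*δ) ≤ (1-δ)^N := by
      have := one_add_mul_le_pow (a := -δ) (by linarith) N
      calc 1 - (N:ℝ)*δ = 1 + N*(-δ) := by ring
      _ ≤ (1 + -δ)^N := this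
      _ = (1-δ)^N := by ring_nf
    have h3 : (1+δ)^N * (1-δ)^N ≤ 1 := by
      rw [← mul_pow]
      have h : (1+δ)*(1-δ) = 1 - δ^2 := by ring
      rw [h]
      exact pow_le_one₀ (by nlinarith) (by nlinarith)
    have hp1 : (0:ℝ) ≤ (1+δ)^N := by positivity
    have hp2 : (2:ℝ)/3 ≤ (1-δ)^N := by linarith
    nlinarith
  -- T and its recurrence
  set T : ℕ → ℂ := fun j => (1 - ρ^j)/(1-ρ) with hTdef
  have hT0 : T 0 = 0 := by simp [hTdef]
  have hT1 : T 1 = 1 := by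
    simp only [hTdef, pow_one]
    exact div_self h1ρ
  have hTrec : ∀ j, T (j+2) = (1+ρ)*T (j+1) - ρ * T j := by
    intro j
    simp only [hTdef]
    field_simp
    ring
  set c₀ : ℝ := 8*C/(N:ℝ)^2 with hc₀def
  have hc₀0 : 0 ≤ c₀ := by positivity
  -- key auxiliary bound
  have hBm : ∀ m : ℕ, m ≤ N → 2*C/(N:ℝ)^4 * m ≤ 2*C/(N:ℝ)^2 := by
    intro m hm
    have hmr : (m:ℝ) ≤ N := by exact_mod_cast hm
    have e1 : 2*C/(N:ℝ)^4 * m = 2*C*m/(N:ℝ)^4 := by ring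
    have e2 : 2*C*(m:ℝ)/(N:ℝ)^4 ≤ 2*C*(N:ℝ)/(N:ℝ)^4 := by gcongr
    have e3 : 2*C*(N:ℝ)/(N:ℝ)^4 = 2*C/(N:ℝ)^3 := by field_simp
    have e4 : 2*C/(N:ℝ)^3 ≤ 2*C/(N:ℝ)^2 := by
      gcongr
      all_goals first | linarith | norm_num
    calc 2*C/(N:ℝ)^4 * m = 2*C*(m:ℝ)/(N:ℝ)^4 := by ring
    _ ≤ 2*C*(N:ℝ)/(N:ℝ)^4 := e2
    _ = 2*C/(N:ℝ)^3 := e3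
    _ ≤ 2*C/(N:ℝ)^2 := e4
  -- main induction
  have key : ∀ m : ℕ, m ≤ N →
      ‖q (m+1) - q m‖ ≤ (1+δ)^m ∧
      ‖q m‖ ≤ m * (1+δ)^m ∧
      ‖(q (m+1) - T (m+1)) - (q m - T m)‖ ≤ m * c₀ ∧
      ‖q (m+1) - T (m+1)‖ ≤ ((m:ℝ)+1)^2 * c₀ := by
    intro m
    induction m with
    | zero =>
      intro _
      refine ⟨?_, ?_, ?_, ?_⟩
      · simp [hq0, hq1]
      · simp [hq0]
      · simp [hq0, hq1, hT0, hT1]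
      · simp only [hq1, hT1, Nat.cast_zero]
        norm_num
        positivity
    | succ m ih =>
      intro hm1
      have hm : m ≤ N := Nat.le_of_succ_le hm1
      obtain ⟨IH1, IH2, IH3, IH4⟩ := ih hm
      have hmr : (m:ℝ) ≤ N := by exact_mod_cast hm
      have hP0 : (0:ℝ) ≤ (1+δ)^m := by positivity
      have hP32 : (1+δ)^m ≤ 3/2 := hpow m hm
      have hB := hBm m hm
      -- identity for differences of q
      have hd : q (m+2) - q (m+1)
          = (ρ + a (m+1)) * (q (m+1) - q m) + (a (m+1) - b (m+1)) * q m := by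
        rw [hq m]; ring
      have habsρa : ‖ρ + a (m+1)‖ ≤ 1 + 2*C/(N:ℝ)^2 := by
        calc ‖ρ + a (m+1)‖ ≤ ‖ρ‖ + ‖a (m+1)‖ :=
              norm_add_le _ _
        _ ≤ 1 + 2*C/(N:ℝ)^2 := by rw [hρ1]; exact add_le_add (le_refl _) (hak _)
      have hd_bound : ‖q (m+2) - q (m+1)‖
          ≤ (1 + 2*C/(N:ℝ)^2) * (1+δ)^m + (2*C/(N:ℝ)^4 * m) * (1+δ)^m := by
        rw [hd]
        calc ‖(ρ + a (m+1)) * (q (m+1) - q m) + (a (m+1) - b (m+1)) * q m‖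
            ≤ ‖(ρ + a (m+1)) * (q (m+1) - q m)‖
              + ‖(a (m+1) - b (m+1)) * q m‖ := norm_add_le _ _
        _ = ‖ρ + a (m+1)‖ * ‖q (m+1) - q m‖
              + ‖a (m+1) - b (m+1)‖ * ‖q m‖ := by
            rw [norm_mul, norm_mul]
        _ ≤ (1 + 2*C/(N:ℝ)^2) * (1+δ)^m + (2*C/(N:ℝ)^4) * (m * (1+δ)^m) :=
            add_le_add
              (mul_le_mul habsρa IH1 (norm_nonneg _) (by positivity))
              (mul_le_mul (hab _) IH2 (norm_nonneg _) (by positivity))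
        _ = (1 + 2*C/(N:ℝ)^2) * (1+δ)^m + (2*C/(N:ℝ)^4 * m) * (1+δ)^m := by ring
      have step1 : ‖q (m+2) - q (m+1)‖ ≤ (1+δ)^(m+1) := by
        refine le_trans hd_bound ?_
        have h5 : (1 + 2*C/(N:ℝ)^2) + (2*C/(N:ℝ)^4 * m) ≤ 1 + δ := by
          have hpos : (0:ℝ) ≤ 2*C/(N:ℝ)^2 := by positivity
          rw [hδdef]
          have h2 : 6*C/(N:ℝ)^2 = 2*C/(N:ℝ)^2 + 2*C/(N:ℝ)^2 + 2*C/(N:ℝ)^2 := by ring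
          linarith [hB, hpos]
        calc (1 + 2*C/(N:ℝ)^2) * (1+δ)^m + (2*C/(N:ℝ)^4 * m) * (1+δ)^m
            = ((1 + 2*C/(N:ℝ)^2) + (2*C/(N:ℝ)^4 * m)) * (1+δ)^m := by ring
        _ ≤ (1+δ) * (1+δ)^m := mul_le_mul_of_nonneg_right h5 hP0
        _ = (1+δ)^(m+1) := by rw [pow_succ]; ring
      have step2 : ‖q (m+1)‖ ≤ ((m:ℝ)+1) * (1+δ)^(m+1) := by
        calc ‖q (m+1)‖ = ‖q m + (q (m+1) - q m)‖ := by
              congr 1; ring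
        _ ≤ ‖q m‖ + ‖q (m+1) - q m‖ := norm_add_le _ _
        _ ≤ m * (1+δ)^m + (1+δ)^m := add_le_add IH2 IH1
        _ = ((m:ℝ)+1) * (1+δ)^m := by ring
        _ ≤ ((m:ℝ)+1) * (1+δ)^(m+1) := by
            apply mul_le_mul_of_nonneg_left _ (by positivity)
            exact pow_le_pow_right₀ (by linarith) (Nat.le_succ m)
      -- identity for differences of q - T
      have hg : (q (m+2) - T (m+2)) - (q (m+1) - T (m+1))
          = ρ * ((q (m+1) - T (m+1)) - (q m - T m))
            + a (m+1) * (q (m+1) - q m) + (a (m+1) - b (m+1)) * q m := by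
        rw [hq m, hTrec m]; ring
      have step3 : ‖(q (m+2) - T (m+2)) - (q (m+1) - T (m+1))‖
          ≤ ((m:ℝ)+1) * c₀ := by
        rw [hg]
        have t1 : ‖ρ * ((q (m+1) - T (m+1)) - (q m - T m))
              + a (m+1) * (q (m+1) - q m) + (a (m+1) - b (m+1)) * q m‖
            ≤ ‖ρ‖ * ‖(q (m+1) - T (m+1)) - (q m - T m)‖
              + ‖a (m+1)‖ * ‖q (m+1) - q m‖
              + ‖a (m+1) - b (m+1)‖ * ‖q m‖ := by
          calc ‖_‖ ≤ ‖ρ * ((q (m+1) - T (m+1)) - (q m - T m))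
                  + a (m+1) * (q (m+1) - q m)‖
                + ‖(a (m+1) - b (m+1)) * q m‖ := norm_add_le _ _
          _ ≤ ‖ρ * ((q (m+1) - T (m+1)) - (q m - T m))‖
                + ‖a (m+1) * (q (m+1) - q m)‖
                + ‖(a (m+1) - b (m+1)) * q m‖ := by
              gcongr
              exact norm_add_le _ _
          _ = _ := by rw [norm_mul, norm_mul, norm_mul]
        refine le_trans t1 ?_
        have t2 : ‖ρ‖ * ‖(q (m+1) - T (m+1)) - (q m - T m)‖
            ≤ m * c₀ := by rw [hρ1, one_mul]; exact IH3
        have t3 : ‖a (m+1)‖ * ‖q (m+1) - q m‖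
            ≤ (2*C/(N:ℝ)^2) * (1+δ)^m := by
          exact mul_le_mul (hak _) IH1 (norm_nonneg _) (by positivity)
        have t4 : ‖a (m+1) - b (m+1)‖ * ‖q m‖
            ≤ (2*C/(N:ℝ)^4) * (m * (1+δ)^m) := by
          exact mul_le_mul (hab _) IH2 (norm_nonneg _) (by positivity)
        have t5 : (2*C/(N:ℝ)^2) * (1+δ)^m + (2*C/(N:ℝ)^4) * (m * (1+δ)^m) ≤ c₀ := by
          have : (2*C/(N:ℝ)^2) * (1+δ)^m + (2*C/(N:ℝ)^4) * (m * (1+δ)^m)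
              = ((2*C/(N:ℝ)^2) + (2*C/(N:ℝ)^4 * m)) * (1+δ)^m := by ring
          rw [this, hc₀def]
          have h6 : (2*C/(N:ℝ)^2) + (2*C/(N:ℝ)^4 * m) ≤ 4*C/(N:ℝ)^2 := by
            have : 4*C/(N:ℝ)^2 = 2*C/(N:ℝ)^2 + 2*C/(N:ℝ)^2 := by ring
            rw [this]; linarith
          have h7 : (0:ℝ) ≤ (2*C/(N:ℝ)^2) + (2*C/(N:ℝ)^4 * m) := by positivity
          have h8 : (4*C/(N:ℝ)^2) * (3/2) = 6*C/(N:ℝ)^2 := by ring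
          have h9 : 6*C/(N:ℝ)^2 ≤ 8*C/(N:ℝ)^2 := by
            have h10 : 8*C/(N:ℝ)^2 - 6*C/(N:ℝ)^2 = 2*C/(N:ℝ)^2 := by ring
            have h11 : (0:ℝ) ≤ 2*C/(N:ℝ)^2 := by positivity
            linarith
          calc ((2*C/(N:ℝ)^2) + (2*C/(N:ℝ)^4 * m)) * (1+δ)^m
              ≤ (4*C/(N:ℝ)^2) * (3/2) := mul_le_mul h6 hP32 hP0 (by positivity)
          _ ≤ 8*C/(N:ℝ)^2 := by rw [h8]; exact h9
        push_cast
        linarith [t2, t3, t4, t5]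
      have step4 : ‖q (m+2) - T (m+2)‖ ≤ ((m:ℝ)+1+1)^2 * c₀ := by
        calc ‖q (m+2) - T (m+2)‖
            = ‖(q (m+1) - T (m+1))
              + ((q (m+2) - T (m+2)) - (q (m+1) - T (m+1)))‖ := by congr 1; ring
        _ ≤ ‖q (m+1) - T (m+1)‖
              + ‖(q (m+2) - T (m+2)) - (q (m+1) - T (m+1))‖ :=
            norm_add_le _ _
        _ ≤ ((m:ℝ)+1)^2 * c₀ + ((m:ℝ)+1) * c₀ := add_le_add IH4 step3
        _ ≤ ((m:ℝ)+1+1)^2 * c₀ := by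
            have hr : ((m:ℝ)+1+1)^2*c₀ - ((m:ℝ)+1)^2*c₀ - ((m:ℝ)+1)*c₀ = ((m:ℝ)+2)*c₀ := by
              ring
            have hnn : (0:ℝ) ≤ ((m:ℝ)+2)*c₀ :=
              mul_nonneg (by positivity) hc₀0
            linarith
      refine ⟨?_, ?_, ?_, ?_⟩
      · exact step1
      · push_cast; exact step2
      · push_cast; exact step3
      · push_cast; exact step4
  -- conclude
  obtain ⟨m, rfl⟩ : ∃ m : ℕ, k = m + 1 := ⟨k - 1, by omega⟩
  have hm : m ≤ N := by omega
  obtain ⟨K1, K2, K3, K4⟩ := key m hm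
  have hmr : (m:ℝ) ≤ N := by exact_mod_cast hm
  have hP0 : (0:ℝ) ≤ (1+δ)^m := by positivity
  have hP32 : (1+δ)^m ≤ 3/2 := hpow m hm
  refine ⟨?_, ?_, ?_⟩
  · simp only [Nat.add_sub_cancel]
    linarith [K1]
  · calc ‖q (m+1)‖ = ‖q m + (q (m+1) - q m)‖ := by congr 1; ring
    _ ≤ ‖q m‖ + ‖q (m+1) - q m‖ := norm_add_le _ _
    _ ≤ m * (1+δ)^m + (1+δ)^m := add_le_add K2 K1
    _ = ((m:ℝ)+1) * (1+δ)^m := by ring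
    _ ≤ 2 * N := by
        nlinarith [mul_nonneg (show (0:ℝ) ≤ (N:ℝ) - m by linarith) hP0,
          mul_nonneg (show (0:ℝ) ≤ (m:ℝ)+1 by positivity)
            (show (0:ℝ) ≤ 3/2 - (1+δ)^m by linarith)]
  · have hTm : T (m+1) = (1 - ρ^(m+1))/(1-ρ) := by simp [hTdef]
    rw [← hTm]
    refine le_trans K4 ?_
    have h1 : ((m:ℝ)+1)^2 ≤ (2*(N:ℝ))^2 := by
      nlinarith [mul_nonneg (show (0:ℝ) ≤ 2*(N:ℝ)-((m:ℝ)+1) by linarith)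
        (show (0:ℝ) ≤ 2*(N:ℝ)+((m:ℝ)+1) by positivity)]
    calc ((m:ℝ)+1)^2 * c₀ ≤ (2*(N:ℝ))^2 * c₀ :=
          mul_le_mul_of_nonneg_right h1 hc₀0
    _ = 32 * C := by
        have hNne : (N:ℝ) ≠ 0 := ne_of_gt hN0
        rw [hc₀def]; field_simp; ring
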